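/- Let m ≥ 2 and let n ≥ 1 be divisible by m, with base-m representation n = d_s m^s + ... + d_t m^t where 1 ≤ s ≤ t, 1 ≤ d_s ≤ m-1, and 0 ≤ d_{s+1}, ..., d_t ≤ m-1. Then for every d_0 with 0 ≤ d_0 ≤ m-1, the number c_m(n - d_0) of m-ary partitions of n - d_0 without gaps satisfies c_m(n - d_0) ≡ ε_s + (-1)^{s-1} (d_s - 1) · ∑_{i=s}^{t} ∏_{j=s+1}^{i} d_j (mod m), where ε_s = 0 if s is even and ε_s = 1 if s is odd. -/

import Mathlib

open Finset

/-- An `m`-ary partition of `n`: a finitely supported function `c : ℕ →₀ ℕ`, where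
`c j` is the multiplicity of the part `m^j`, with total sum `∑ c j · m^j = n`. -/
def IsMaryPartition (m : ℕ) (n : ℕ) (c : ℕ →₀ ℕ) : Prop :=
  c.sum (fun j v => v * m ^ j) = n

/-- An `m`-ary partition is *without gaps* if `m^j` occurs as a part whenever `m^{j+1}`
occurs as a part. -/
def MaryWithoutGaps (c : ℕ →₀ ℕ) : Prop :=
  ∀ j : ℕ, 0 < c (j + 1) → 0 < c j

namespace AFS




def succEmb : ℕ ↪ ℕ := ⟨Nat.succ, Nat.succ_injective⟩

noncomputable def shiftDown (c : ℕ →₀ ℕ) : ℕ →₀ ℕ :=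
  Finsupp.comapDomain Nat.succ c (Nat.succ_injective.injOn)

noncomputable def shiftUp (c : ℕ →₀ ℕ) : ℕ →₀ ℕ := Finsupp.embDomain succEmb c

@[simp] lemma shiftDown_apply (c : ℕ →₀ ℕ) (j : ℕ) : shiftDown c j = c (j + 1) := rfl

@[simp] lemma shiftUp_apply_succ (c : ℕ →₀ ℕ) (j : ℕ) : shiftUp c (j + 1) = c j :=
  Finsupp.embDomain_apply_self succEmb c j

@[simp] lemma shiftUp_apply_zero (c : ℕ →₀ ℕ) : shiftUp c 0 = 0 := by
  apply Finsupp.embDomain_notin_range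
  rintro ⟨j, hj⟩
  exact Nat.succ_ne_zero j hj

lemma decomp (c : ℕ →₀ ℕ) : c = Finsupp.single 0 (c 0) + shiftUp (shiftDown c) := by
  ext j
  cases j with
  | zero => simp
  | succ j => simp [Finsupp.single_apply]

@[simp] lemma shiftDown_single_add (k : ℕ) (c : ℕ →₀ ℕ) :
    shiftDown (Finsupp.single 0 k + shiftUp c) = c := by
  ext j
  simp [Finsupp.single_apply]

lemma sum_shiftUp (m : ℕ) (c : ℕ →₀ ℕ) :
    (shiftUp c).sum (fun j v => v * m ^ j) = m * c.sum (fun j v => v * m ^ j) := by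
  rw [shiftUp, Finsupp.sum_embDomain, Finsupp.mul_sum]
  exact Finsupp.sum_congr fun j _ => by show c j * m ^ (j+1) = m * (c j * m ^ j); ring

lemma sumDecomp (m : ℕ) (c : ℕ →₀ ℕ) :
    c.sum (fun j v => v * m ^ j) = c 0 + m * (shiftDown c).sum (fun j v => v * m ^ j) := by
  conv_lhs => rw [decomp c]
  rw [Finsupp.sum_add_index' (fun a => by simp) (fun a b₁ b₂ => add_mul b₁ b₂ _),
    Finsupp.sum_single_index (by simp), sum_shiftUp]
  simp

lemma sum_single_add (m k : ℕ) (c : ℕ →₀ ℕ) :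
    (Finsupp.single 0 k + shiftUp c).sum (fun j v => v * m ^ j)
      = k + m * c.sum (fun j v => v * m ^ j) := by
  rw [sumDecomp]
  simp





lemma zero_of_gapfree_head (c : ℕ →₀ ℕ) (hg : MaryWithoutGaps c) (h0 : c 0 = 0) :
    c = 0 := by
  have : ∀ j, c j = 0 := by
    intro j
    induction j with
    | zero => exact h0
    | succ j ih =>
      by_contra h
      have := hg j (Nat.pos_of_ne_zero h)
      omega
  ext j; simp [this]

lemma head_pos (m n : ℕ) (c : ℕ →₀ ℕ) (hp : IsMaryPartition m n c)
    (hg : MaryWithoutGaps c) (hn : 1 ≤ n) : 0 < c 0 := by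
  rcases Nat.eq_zero_or_pos (c 0) with h | h
  · exfalso
    have := zero_of_gapfree_head c hg h
    rw [IsMaryPartition, this, Finsupp.sum_zero_index] at hp
    omega
  · exact h

lemma term_le (m n : ℕ) (c : ℕ →₀ ℕ) (hp : IsMaryPartition m n c) (j : ℕ) :
    c j * m ^ j ≤ n := by
  rcases Nat.eq_zero_or_pos (c j) with h | h
  · simp [h]
  · have hj : j ∈ c.support := Finsupp.mem_support_iff.mpr h.ne'
    calc c j * m ^ j ≤ ∑ i ∈ c.support, c i * m ^ i :=
          Finset.single_le_sum (f := fun i => c i * m ^ i) (fun i _ => Nat.zero_le _) hj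
      _ = n := hp

lemma apply_le (m n : ℕ) (hm : 2 ≤ m) (c : ℕ →₀ ℕ) (hp : IsMaryPartition m n c) (j : ℕ) :
    c j ≤ n := by
  have := term_le m n c hp j
  have h1 : 1 ≤ m ^ j := Nat.one_le_pow _ _ (by omega)
  calc c j = c j * 1 := (mul_one _).symm
    _ ≤ c j * m ^ j := Nat.mul_le_mul_left _ h1
    _ ≤ n := this

lemma apply_eq_zero_of_gt (m n : ℕ) (hm : 2 ≤ m) (c : ℕ →₀ ℕ)
    (hp : IsMaryPartition m n c) (j : ℕ) (hj : n < j) : c j = 0 := by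
  by_contra h
  have h1 : 1 ≤ c j := Nat.pos_of_ne_zero h
  have h2 : m ^ j ≤ n := le_trans (by nlinarith [Nat.one_le_pow j m (show 0 < m by omega)]) (term_le m n c hp j)
  have h3 : j < 2 ^ j := Nat.lt_two_pow_self
  have h4 : 2 ^ j ≤ m ^ j := Nat.pow_le_pow_left hm j
  omega

lemma gf_finite (m : ℕ) (hm : 2 ≤ m) (n : ℕ) :
    Finite {c : ℕ →₀ ℕ // IsMaryPartition m n c ∧ MaryWithoutGaps c} := by
  have : ∀ c : {c : ℕ →₀ ℕ // IsMaryPartition m n c ∧ MaryWithoutGaps c},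
      ∀ j : Fin (n+1), c.1 j < n + 1 := fun c j =>
    Nat.lt_succ_of_le (apply_le m n hm c.1 c.2.1 j)
  apply Finite.of_injective (fun c => fun j : Fin (n+1) => (⟨c.1 j, this c j⟩ : Fin (n+1)))
  intro c c' h
  apply Subtype.ext
  ext j
  rcases le_or_gt j n with hj | hj
  · have := congrFun h ⟨j, by omega⟩
    simpa using congrArg Fin.val this
  · rw [apply_eq_zero_of_gt m n hm c.1 c.2.1 j hj, apply_eq_zero_of_gt m n hm c'.1 c'.2.1 j hj]


noncomputable def bcard (m n : ℕ) : ℕ :=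
  Nat.card {c : ℕ →₀ ℕ // IsMaryPartition m n c ∧ MaryWithoutGaps c}

lemma bcard_zero (m : ℕ) (hm : 2 ≤ m) : bcard m 0 = 1 := by
  rw [bcard, Nat.card_eq_one_iff_unique]
  constructor
  · constructor
    rintro ⟨c, hc, -⟩ ⟨c', hc', -⟩
    apply Subtype.ext
    have h : ∀ (x : ℕ →₀ ℕ), IsMaryPartition m 0 x → x = 0 := by
      intro x hx
      rw [IsMaryPartition, Finsupp.sum, Finset.sum_eq_zero_iff] at hx
      ext j
      rcases Nat.eq_zero_or_pos (x j) with h | h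
      · simp [h]
      · have h1 := hx j (Finsupp.mem_support_iff.mpr h.ne')
        have h2 : 0 < m ^ j := Nat.pow_pos (by omega)
        exact absurd h1 (Nat.mul_ne_zero h.ne' h2.ne')
    show c = c'
    rw [h c hc, h c' hc']
  · exact ⟨⟨0, by simp [IsMaryPartition], fun j h => by simp at h⟩⟩

lemma lt_ceil_iff (m : ℕ) (hm : 2 ≤ m) (n q : ℕ) (hn : 1 ≤ n) :
    q < (n + m - 1) / m ↔ m * q < n := by
  rw [Nat.lt_iff_add_one_le, Nat.le_div_iff_mul_le (by omega : 0 < m), add_one_mul,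
    mul_comm m q]
  generalize q * m = x
  omega

noncomputable def recEquiv (m : ℕ) (hm : 2 ≤ m) (n : ℕ) (hn : 1 ≤ n) :
    {c : ℕ →₀ ℕ // IsMaryPartition m n c ∧ MaryWithoutGaps c} ≃
      {p : Fin ((n + m - 1) / m) × (ℕ →₀ ℕ) //
        IsMaryPartition m p.1 p.2 ∧ MaryWithoutGaps p.2} where
  toFun c := ⟨(⟨(shiftDown c.1).sum (fun j v => v * m ^ j), by
      rw [lt_ceil_iff m hm n _ hn]
      have hd := sumDecomp m c.1
      rw [c.2.1] at hd
      have := head_pos m n c.1 c.2.1 c.2.2 hn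
      omega⟩, shiftDown c.1),
    rfl, fun j hj => c.2.2 (j + 1) hj⟩
  invFun p := ⟨Finsupp.single 0 (n - m * p.1.1.1) + shiftUp p.1.2, by
      rw [IsMaryPartition, sum_single_add, p.2.1]
      have : m * p.1.1.1 < n := (lt_ceil_iff m hm n _ hn).mp p.1.1.2
      omega,
    by
      intro j
      cases j with
      | zero =>
        intro _
        have : m * p.1.1.1 < n := (lt_ceil_iff m hm n _ hn).mp p.1.1.2
        simp only [Finsupp.add_apply, Finsupp.single_apply, shiftUp_apply_succ]
        simp
        omega
      | succ j =>
        intro hj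
        simp only [Finsupp.add_apply, Finsupp.single_apply] at hj ⊢
        simp only [shiftUp_apply_succ] at hj ⊢
        simpa using p.2.2 j (by simpa using hj)⟩
  left_inv c := by
    apply Subtype.ext
    have hd := sumDecomp m c.1
    rw [c.2.1] at hd
    have hk : n - m * (shiftDown c.1).sum (fun j v => v * m ^ j) = c.1 0 := by omega
    simp only [hk]
    exact (decomp c.1).symm
  right_inv p := by
    apply Subtype.ext
    have h2 : shiftDown (Finsupp.single 0 (n - m * p.1.1.1) + shiftUp p.1.2) = p.1.2 :=
      shiftDown_single_add _ _
    apply Prod.ext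
    · apply Fin.ext
      show (shiftDown _).sum (fun j v => v * m ^ j) = p.1.1.1
      rw [h2]
      exact p.2.1
    · exact h2

lemma bcard_rec (m : ℕ) (hm : 2 ≤ m) (n : ℕ) (hn : 1 ≤ n) :
    bcard m n = ∑ q ∈ range ((n + m - 1) / m), bcard m q := by
  have E := (recEquiv m hm n hn).trans
    (Equiv.subtypeProdEquivSigmaSubtype
      (fun (q : Fin ((n + m - 1) / m)) (c : ℕ →₀ ℕ) =>
        IsMaryPartition m q c ∧ MaryWithoutGaps c))
  have hfin : ∀ q : Fin ((n + m - 1) / m),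
      Finite {c : ℕ →₀ ℕ // IsMaryPartition m q c ∧ MaryWithoutGaps c} :=
    fun q => gf_finite m hm q
  rw [bcard, Nat.card_congr E]
  haveI := hfin
  haveI : ∀ q : Fin ((n + m - 1) / m),
      Fintype {c : ℕ →₀ ℕ // IsMaryPartition m q c ∧ MaryWithoutGaps c} :=
    fun q => Fintype.ofFinite _
  rw [Nat.card_eq_fintype_card, Fintype.card_sigma]
  rw [← Fin.sum_univ_eq_sum_range (fun q => bcard m q)]
  exact Finset.sum_congr rfl fun q _ => (Nat.card_eq_fintype_card).symm

noncomputable def Ssum (m N : ℕ) : ℕ := ∑ q ∈ range (N + 1), bcard m q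

lemma Ssum_zero (m : ℕ) (hm : 2 ≤ m) : Ssum m 0 = 1 := by
  simp [Ssum, bcard_zero m hm]

lemma bcard_small (m : ℕ) (hm : 2 ≤ m) (q : ℕ) (h1 : 1 ≤ q) (h2 : q ≤ m - 1) :
    bcard m q = 1 := by
  rw [bcard_rec m hm q h1]
  have h : (q + m - 1) / m = 1 := Nat.div_eq_of_lt_le (by omega) (by omega)
  rw [h]
  simp [bcard_zero m hm]

lemma ceil_div (m : ℕ) (hm : 2 ≤ m) (Q r : ℕ) (h1 : 1 ≤ r) (h2 : r ≤ m) :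
    (m * Q + r + m - 1) / m = Q + 1 := by
  apply Nat.div_eq_of_lt_le
  · have e1 : (Q + 1) * m = m * Q + m := by ring
    omega
  · have e2 : (Q + 1 + 1) * m = m * Q + m + m := by ring
    omega

lemma cast_pred (m : ℕ) (hm : 2 ≤ m) : ((m - 1 : ℕ) : ZMod m) = -1 := by
  have h : ((m - 1 : ℕ) : ZMod m) = (m : ZMod m) - 1 := by
    push_cast [Nat.cast_sub (by omega : 1 ≤ m)]; ring
  rw [h, ZMod.natCast_self]; ring

lemma Ssum_rec (m : ℕ) (hm : 2 ≤ m) (Q : ℕ) :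
    ∀ u, u ≤ m - 1 →
      ((Ssum m (m * Q + u) : ℕ) : ZMod m) = 1 + (u : ZMod m) * (Ssum m Q : ℕ) := by
  induction Q with
  | zero =>
    intro u hu
    have h : Ssum m u = 1 + u * Ssum m 0 := by
      rw [Ssum_zero m hm, mul_one, Ssum, sum_range_succ']
      rw [bcard_zero m hm]
      have : ∀ k ∈ range u, bcard m (k + 1) = 1 := fun k hk =>
        bcard_small m hm (k + 1) (by omega) (by have := mem_range.mp hk; omega)
      rw [Finset.sum_congr rfl this]
      simp [add_comm]
    rw [show m * 0 + u = u by ring, h]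
    push_cast
    ring
  | succ Q ih =>
    intro u hu
    have key : Ssum m (m * (Q + 1) + u) =
        Ssum m (m * Q + (m - 1)) + (Ssum m Q + u * Ssum m (Q + 1)) := by
      have e1 : m * (Q + 1) + u + 1 = (m * Q + (m - 1) + 1) + (u + 1) := by
        have : m * (Q + 1) = m * Q + m := by ring
        omega
      rw [Ssum, e1, Finset.sum_range_add]
      congr 1
      rw [sum_range_succ']
      have h0 : bcard m (m * Q + (m - 1) + 1 + 0) = Ssum m Q := by
        have e2 : m * Q + (m - 1) + 1 + 0 = m * Q + m := by omega
        rw [e2, bcard_rec m hm _ (by omega)]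
        have e3 : (m * Q + m + m - 1) / m = Q + 1 := ceil_div m hm Q m (by omega) le_rfl
        rw [e3, Ssum]
      have h1 : ∀ k ∈ range u, bcard m (m * Q + (m - 1) + 1 + (k + 1)) = Ssum m (Q + 1) := by
        intro k hk
        have hk' := mem_range.mp hk
        have e2 : m * Q + (m - 1) + 1 + (k + 1) = m * (Q + 1) + (k + 1) := by
          have : m * (Q + 1) = m * Q + m := by ring
          omega
        rw [e2, bcard_rec m hm _ (by omega)]
        have e3 : (m * (Q + 1) + (k + 1) + m - 1) / m = Q + 1 + 1 :=
          ceil_div m hm (Q + 1) (k + 1) (by omega) (by omega)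
        rw [e3, Ssum]
      rw [Finset.sum_congr rfl h1, h0]
      simp [add_comm, mul_comm]
    rw [key]
    push_cast
    rw [ih (m - 1) le_rfl]
    rw [cast_pred m hm]
    ring

noncomputable def digitVal (m : ℕ) (e : ℕ → ℕ) (k : ℕ) : ℕ := ∑ i ∈ range k, e i * m ^ i

lemma digitVal_succ (m : ℕ) (e : ℕ → ℕ) (k : ℕ) :
    digitVal m e (k + 1) = m * digitVal m (fun i => e (i + 1)) k + e 0 := by
  rw [digitVal, sum_range_succ', digitVal, Finset.mul_sum]
  simp only [pow_zero, mul_one]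
  congr 1
  exact Finset.sum_congr rfl fun i _ => by ring

lemma Ssum_digit (m : ℕ) (hm : 2 ≤ m) :
    ∀ (k : ℕ) (e : ℕ → ℕ), (∀ i, i < k → e i ≤ m - 1) →
      ((Ssum m (digitVal m e k) : ℕ) : ZMod m)
        = ∑ a ∈ range (k + 1), ∏ b ∈ range a, (e b : ZMod m) := by
  intro k
  induction k with
  | zero => intro e he; simp [digitVal, Ssum_zero m hm]
  | succ k ih =>
    intro e he
    rw [digitVal_succ, Ssum_rec m hm _ (e 0) (he 0 (by omega)),
      ih (fun i => e (i + 1)) (fun i hi => he (i + 1) (by omega))]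
    rw [sum_range_succ' (fun a => ∏ b ∈ range a, (e b : ZMod m)) (k + 1)]
    have : ∀ a ∈ range (k + 1),
        (∏ b ∈ range (a + 1), (e b : ZMod m)) = (e 0 : ZMod m) * ∏ b ∈ range a, (e (b + 1) : ZMod m) := by
      intro a _
      rw [prod_range_succ' (fun b => (e b : ZMod m)) a]
      ring
    rw [Finset.sum_congr rfl this, ← Finset.mul_sum]
    simp [add_comm]

lemma Ssum_pow (m : ℕ) (hm : 2 ≤ m) :
    ∀ (r V : ℕ), 1 ≤ V →
      ((Ssum m (m ^ r * V - 1) : ℕ) : ZMod m)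
        = (if Even r then 0 else 1) + (-1) ^ r * ((Ssum m (V - 1) : ℕ) : ZMod m) := by
  intro r
  induction r with
  | zero => intro V hV; simp
  | succ r ih =>
    intro V hV
    have hy : 1 ≤ m ^ r * V :=
      Nat.one_le_iff_ne_zero.mpr (Nat.mul_ne_zero (Nat.pow_pos (by omega : 0 < m) : 0 < m ^ r).ne' (by omega))
    obtain ⟨w, hw⟩ : ∃ w, m ^ r * V = w + 1 := ⟨m ^ r * V - 1, by omega⟩
    have e1 : m ^ (r + 1) * V - 1 = m * (m ^ r * V - 1) + (m - 1) := by
      have h1 : m ^ (r + 1) * V = m * w + m := by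
        have : m ^ (r + 1) * V = m * (m ^ r * V) := by ring
        rw [this, hw]; ring
      have h2 : m ^ r * V - 1 = w := by omega
      rw [h1, h2]
      omega
    rw [e1, Ssum_rec m hm _ (m - 1) le_rfl, ih V hV, cast_pred m hm]
    rcases Nat.even_or_odd r with h | h
    · rw [if_pos h, if_neg (by simp [Nat.even_add_one, h]), pow_succ]
      ring
    · rw [if_neg (Nat.not_even_iff_odd.mpr h),
        if_pos (by simp [Nat.even_add_one, Nat.not_even_iff_odd.mpr h]), pow_succ]
      ring


lemma sum_Icc_nat {M : Type*} [AddCommMonoid M] (f : ℕ → M) (a b : ℕ) :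
    ∑ j ∈ Icc a b, f j = ∑ i ∈ range (b + 1 - a), f (a + i) := by
  rw [← Finset.Ico_add_one_right_eq_Icc, Finset.sum_Ico_eq_sum_range]

lemma prod_Icc_nat {M : Type*} [CommMonoid M] (f : ℕ → M) (a b : ℕ) :
    ∏ j ∈ Icc a b, f j = ∏ i ∈ range (b + 1 - a), f (a + i) := by
  rw [← Finset.Ico_add_one_right_eq_Icc, Finset.prod_Ico_eq_prod_range]

end AFS

/-- **Andrews–Fraenkel–Sellers, Theorem 2.1 of [afs16].** -/
theorem mary_gapfree_count_mod (m : ℕ) (hm : 2 ≤ m)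
    (n s t : ℕ) (hs : 1 ≤ s) (hst : s ≤ t) (d : ℕ → ℕ)
    (hds : 1 ≤ d s ∧ d s ≤ m - 1) (hd : ∀ j, s + 1 ≤ j → j ≤ t → d j ≤ m - 1)
    (hn : n = ∑ j ∈ Icc s t, d j * m ^ j)
    (d₀ : ℕ) (hd₀ : d₀ ≤ m - 1) :
    (Nat.card {c : ℕ →₀ ℕ // IsMaryPartition m (n - d₀) c ∧ MaryWithoutGaps c} : ℤ)
      ≡ (if Even s then 0 else 1)
          + (-1) ^ (s - 1) * ((d s : ℤ) - 1) * ∑ i ∈ Icc s t, ∏ j ∈ Icc (s + 1) i, (d j : ℤ)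
        [ZMOD (m : ℤ)] := by
  classical
  obtain ⟨hds1, hds2⟩ := hds
  obtain ⟨k, hk⟩ : ∃ k, k = t - s := ⟨_, rfl⟩
  obtain ⟨e, he⟩ : ∃ e : ℕ → ℕ, e = fun i => d (s + i) := ⟨_, rfl⟩
  obtain ⟨V, hVdef⟩ : ∃ V, V = AFS.digitVal m e (k + 1) := ⟨_, rfl⟩
  obtain ⟨W, hWdef⟩ : ∃ W, W = AFS.digitVal m (fun i => e (i + 1)) k := ⟨_, rfl⟩
  obtain ⟨M, hMdef⟩ : ∃ M, M = m ^ (s - 1) * V := ⟨_, rfl⟩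
  have hei : ∀ i, e i = d (s + i) := fun i => by rw [he]
  have he0 : e 0 = d s := by rw [hei, Nat.add_zero]
  have hkk : t + 1 - s = k + 1 := by omega
  have hVsum : V = ∑ i ∈ range (k + 1), e i * m ^ i := hVdef
  have hnM : n = m * M := by
    rw [hn, AFS.sum_Icc_nat, hkk, hMdef, hVdef, AFS.digitVal, Finset.mul_sum, Finset.mul_sum]
    refine Finset.sum_congr rfl fun i _ => ?_
    rw [hei]
    have hpow : m ^ (s + i) = m * (m ^ (s - 1) * m ^ i) := by
      rw [← pow_add, ← pow_succ']
      congr 1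
      omega
    rw [hpow]
    ring
  have hV1 : 1 ≤ V := by
    have h0 := Finset.single_le_sum (f := fun i => e i * m ^ i)
      (fun i _ => Nat.zero_le _) (Finset.mem_range.mpr (by omega : 0 < k + 1))
    simp only [pow_zero, mul_one] at h0
    rw [hVsum]
    omega
  have hM1 : 1 ≤ M := by
    have h1 : 1 ≤ m ^ (s - 1) := Nat.one_le_pow _ _ (by omega)
    rw [hMdef]
    exact Nat.one_le_iff_ne_zero.mpr (Nat.mul_ne_zero (by omega) (by omega))
  have hmM : m ≤ m * M := Nat.le_mul_of_pos_right m (by omega)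
  have hn1 : 1 ≤ n - d₀ := by omega
  have hb : AFS.bcard m (n - d₀) = AFS.Ssum m (M - 1) := by
    rw [AFS.bcard_rec m hm _ hn1]
    have hq : (n - d₀ + m - 1) / m = M := by
      apply Nat.div_eq_of_lt_le
      · rw [mul_comm]
        omega
      · have h2 : (M + 1) * m = m * M + m := by ring
        omega
    rw [hq]
    have hM' : M - 1 + 1 = M := by omega
    rw [AFS.Ssum, hM']
  have hVW : V - 1 = m * W + (d s - 1) := by
    have h1 : V = m * W + e 0 := by rw [hVdef, hWdef, AFS.digitVal_succ]
    omega
  rw [← ZMod.intCast_eq_intCast_iff]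
  have hcard : Nat.card {c : ℕ →₀ ℕ // IsMaryPartition m (n - d₀) c ∧ MaryWithoutGaps c}
      = AFS.bcard m (n - d₀) := rfl
  push_cast
  rw [hcard, hb, hMdef, AFS.Ssum_pow m hm (s - 1) V hV1, hVW,
    AFS.Ssum_rec m hm W (d s - 1) (by omega), hWdef,
    AFS.Ssum_digit m hm k (fun i => e (i + 1))
      (fun i hi => by
        show e (i + 1) ≤ m - 1
        rw [hei]
        exact hd (s + (i + 1)) (by omega) (by omega))]
  have hEE : ∑ a ∈ range (k + 1), ∏ b ∈ range a, (((fun i => e (i + 1)) b : ℕ) : ZMod m)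
      = ∑ a ∈ range (k + 1), ∏ b ∈ range a, ((d (s + (b + 1)) : ℕ) : ZMod m) := by
    refine Finset.sum_congr rfl fun a _ => Finset.prod_congr rfl fun b _ => ?_
    show ((e (b + 1) : ℕ) : ZMod m) = _
    rw [hei]
  rw [hEE]
  have hRHS : ∑ i ∈ Icc s t, ∏ j ∈ Icc (s + 1) i, ((d j : ℕ) : ZMod m)
      = ∑ a ∈ range (k + 1), ∏ b ∈ range a, ((d (s + (b + 1)) : ℕ) : ZMod m) := by
    rw [AFS.sum_Icc_nat, hkk]
    refine Finset.sum_congr rfl fun a _ => ?_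
    rw [AFS.prod_Icc_nat]
    have h1 : s + a + 1 - (s + 1) = a := by omega
    rw [h1]
    refine Finset.prod_congr rfl fun b _ => ?_
    have h2 : s + 1 + b = s + (b + 1) := by omega
    rw [h2]
  rw [hRHS]
  obtain ⟨s', rfl⟩ : ∃ s', s = s' + 1 := ⟨s - 1, by omega⟩
  have hs1 : s' + 1 - 1 = s' := by omega
  rw [hs1]
  have hds' : ((d (s' + 1) - 1 : ℕ) : ZMod m) = ((d (s' + 1) : ℕ) : ZMod m) - 1 := by
    push_cast [Nat.cast_sub hds1]
    ring
  rw [hds']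
  rcases Nat.even_or_odd s' with hpar | hpar
  · rw [if_pos hpar, if_neg (by simp [Nat.even_add_one, hpar]), hpar.neg_one_pow]
    ring
  · rw [if_neg (Nat.not_even_iff_odd.mpr hpar),
      if_pos (by simp [Nat.even_add_one, Nat.not_even_iff_odd.mpr hpar]), hpar.neg_one_pow]
    ring
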